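/- arXiv:1902.01652 — 4 statements merged into one kernel-verified Lean document; each statement's English description precedes it below -/
import Mathlib

section
/- Let S = (A, B, C) with A ∈ ℝ^{n×n}, B ∈ ℝ^{n×m}, C ∈ ℝ^{p×n}, and let Ŝ = (Â, B̂, Ĉ) with Â ∈ ℝ^{r×r}, B̂ ∈ ℝ^{r×m}, Ĉ ∈ ℝ^{p×r} be any reduced system, and let τ ≥ 1. Define the time-limited Gramians P_τ = Σ_{k=1}^{τ} A^{k-1} B Bᵀ (Aᵀ)^{k-1}, P̂_τ = Σ_{k=1}^{τ} Â^{k-1} B̂ B̂ᵀ (Âᵀ)^{k-1}, and the cross matrix Y = Σ_{j=1}^{τ} A^{j-1} B B̂ᵀ (Âᵀ)^{j-1}. Set ε² = trace(C P_τ Cᵀ + Ĉ P̂_τ Ĉᵀ − 2 C Y Ĉᵀ). Then ε² ≥ 0, and for every input u : ℕ → ℝ^m, with outputs y(k) = Σ_{j=0}^{k} h(k−j) u(j) and ŷ(k) = Σ_{j=0}^{k} ĥ(k−j) u(j), it holds that max_{k = 0, 1, …, τ} ‖y(k) − ŷ(k)‖₂ ≤ ε · (Σ_{j=0}^{τ}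 ‖u(j)‖₂²)^{1/2}. -/
open Matrix Finset

private lemma trace_mul_transpose_sum {p m : ℕ} (M N : Matrix (Fin p) (Fin m) ℝ) :
    Matrix.trace (M * Nᵀ) = ∑ i, ∑ a, M i a * N i a := by
  simp [Matrix.trace, Matrix.mul_apply, Matrix.diag]

/-- A priori output error bound for any reduced order model.
With time-limited Gramians `P_τ`, `P̂_τ` and cross matrix `Y`, the quantity
`ε² = trace(C P_τ Cᵀ + Ĉ P̂_τ Ĉᵀ − 2 C Y Ĉᵀ)` is nonnegative and
`max_{0 ≤ k ≤ τ} ‖y(k) − ŷ(k)‖₂ ≤ ε (Σ_{j=0}^{τ} ‖u(j)‖₂²)^{1/2}`. -/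
theorem output_error_bound_gramian_form
    {n m p r : ℕ} (τ : ℕ) (hτ : 1 ≤ τ)
    (A : Matrix (Fin n) (Fin n) ℝ) (B : Matrix (Fin n) (Fin m) ℝ)
    (C : Matrix (Fin p) (Fin n) ℝ)
    (Ah : Matrix (Fin r) (Fin r) ℝ) (Bh : Matrix (Fin r) (Fin m) ℝ)
    (Ch : Matrix (Fin p) (Fin r) ℝ)
    (P : Matrix (Fin n) (Fin n) ℝ) (Ph : Matrix (Fin r) (Fin r) ℝ)
    (Y : Matrix (Fin n) (Fin r) ℝ)
    (hP : P = ∑ k ∈ Finset.Icc 1 τ, A ^ (k - 1) * B * Bᵀ * (Aᵀ) ^ (k - 1))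
    (hPh : Ph = ∑ k ∈ Finset.Icc 1 τ, Ah ^ (k - 1) * Bh * Bhᵀ * (Ahᵀ) ^ (k - 1))
    (hY : Y = ∑ j ∈ Finset.Icc 1 τ, A ^ (j - 1) * B * Bhᵀ * (Ahᵀ) ^ (j - 1))
    (ε2 : ℝ)
    (hε2 : ε2 = Matrix.trace (C * P * Cᵀ + Ch * Ph * Chᵀ - (2 : ℝ) • (C * Y * Chᵀ)))
    (h hh : ℕ → Matrix (Fin p) (Fin m) ℝ)
    (hImp0 : h 0 = 0) (hImp : ∀ k, 1 ≤ k → h k = C * A ^ (k - 1) * B)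
    (hhImp0 : hh 0 = 0) (hhImp : ∀ k, 1 ≤ k → hh k = Ch * Ah ^ (k - 1) * Bh)
    (u : ℕ → Fin m → ℝ)
    (y yh : ℕ → Fin p → ℝ)
    (hy : ∀ k, y k = ∑ j ∈ Finset.range (k + 1), (h (k - j)) *ᵥ (u j))
    (hyh : ∀ k, yh k = ∑ j ∈ Finset.range (k + 1), (hh (k - j)) *ᵥ (u j)) :
    0 ≤ ε2 ∧
    ∀ k ≤ τ,
      Real.sqrt (∑ i, (y k i - yh k i) ^ 2) ≤
        Real.sqrt ε2 * Real.sqrt (∑ j ∈ Finset.range (τ + 1), ∑ i, (u j i) ^ 2) := by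
  set E : ℕ → Matrix (Fin p) (Fin m) ℝ := fun k => h k - hh k with hEdef
  have hE0 : E 0 = 0 := by simp [hEdef, hImp0, hhImp0]
  have hCP : C * P * Cᵀ =
      ∑ k ∈ Finset.Icc 1 τ, (C * A ^ (k-1) * B) * (C * A ^ (k-1) * B)ᵀ := by
    rw [hP, Matrix.mul_sum, Matrix.sum_mul]
    refine Finset.sum_congr rfl fun k _ => ?_
    simp [Matrix.transpose_mul, Matrix.transpose_pow, Matrix.mul_assoc]
  have hChPh : Ch * Ph * Chᵀ =
      ∑ k ∈ Finset.Icc 1 τ, (Ch * Ah ^ (k-1) * Bh) * (Ch * Ah ^ (k-1) * Bh)ᵀ := by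
    rw [hPh, Matrix.mul_sum, Matrix.sum_mul]
    refine Finset.sum_congr rfl fun k _ => ?_
    simp [Matrix.transpose_mul, Matrix.transpose_pow, Matrix.mul_assoc]
  have hCY : C * Y * Chᵀ =
      ∑ k ∈ Finset.Icc 1 τ, (C * A ^ (k-1) * B) * (Ch * Ah ^ (k-1) * Bh)ᵀ := by
    rw [hY, Matrix.mul_sum, Matrix.sum_mul]
    refine Finset.sum_congr rfl fun k _ => ?_
    simp [Matrix.transpose_mul, Matrix.transpose_pow, Matrix.mul_assoc]
  have key : ε2 = ∑ k ∈ Finset.Icc 1 τ, ∑ i, ∑ a, (E k i a) ^ 2 := by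
    rw [hε2, hCP, hChPh, hCY]
    rw [Matrix.trace_sub, Matrix.trace_add, Matrix.trace_smul,
      Matrix.trace_sum, Matrix.trace_sum, Matrix.trace_sum,
      Finset.smul_sum, ← Finset.sum_add_distrib, ← Finset.sum_sub_distrib]
    refine Finset.sum_congr rfl fun k hk => ?_
    have hk1 : 1 ≤ k := (Finset.mem_Icc.mp hk).1
    have hEk : E k = C * A ^ (k-1) * B - Ch * Ah ^ (k-1) * Bh := by
      simp [hEdef, hImp k hk1, hhImp k hk1]
    rw [trace_mul_transpose_sum, trace_mul_transpose_sum, trace_mul_transpose_sum, hEk]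
    simp only [Matrix.sub_apply, smul_eq_mul, Finset.mul_sum,
      ← Finset.sum_add_distrib, ← Finset.sum_sub_distrib]
    exact Finset.sum_congr rfl fun i _ => Finset.sum_congr rfl fun a _ => by ring
  have hε2nonneg : 0 ≤ ε2 := by
    rw [key]
    exact Finset.sum_nonneg fun k _ => Finset.sum_nonneg fun i _ =>
      Finset.sum_nonneg fun a _ => sq_nonneg _
  refine ⟨hε2nonneg, fun k hk => ?_⟩
  set U : ℝ := ∑ j ∈ Finset.range (τ + 1), ∑ i, (u j i) ^ 2 with hU
  have hUk_nonneg : ∀ (s : Finset ℕ), 0 ≤ ∑ j ∈ s, ∑ i, (u j i) ^ 2 :=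
    fun s => Finset.sum_nonneg fun j _ => Finset.sum_nonneg fun i _ => sq_nonneg _
  -- main quadratic bound
  have main : (∑ i, (y k i - yh k i) ^ 2) ≤ ε2 * U := by
    have hdiff : ∀ i : Fin p, y k i - yh k i =
        ∑ x ∈ (Finset.range (k+1)) ×ˢ (Finset.univ : Finset (Fin m)),
          E (k - x.1) i x.2 * u x.1 x.2 := by
      intro i
      rw [hy, hyh, Finset.sum_product]
      rw [Finset.sum_apply, Finset.sum_apply, ← Finset.sum_sub_distrib]
      refine Finset.sum_congr rfl fun j _ => ?_
      simp [hEdef, Matrix.mulVec, dotProduct, Matrix.sub_apply,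
        ← Finset.sum_sub_distrib, sub_mul]
    have cs : ∀ i : Fin p, (y k i - yh k i) ^ 2 ≤
        (∑ x ∈ (Finset.range (k+1)) ×ˢ (Finset.univ : Finset (Fin m)),
          (E (k - x.1) i x.2) ^ 2) *
        (∑ x ∈ (Finset.range (k+1)) ×ˢ (Finset.univ : Finset (Fin m)),
          (u x.1 x.2) ^ 2) := by
      intro i
      rw [hdiff i]
      exact Finset.sum_mul_sq_le_sq_mul_sq _ _ _
    -- bound on the input energy part
    have hUk : (∑ x ∈ (Finset.range (k+1)) ×ˢ (Finset.univ : Finset (Fin m)),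
        (u x.1 x.2) ^ 2) ≤ U := by
      rw [Finset.sum_product, hU]
      refine Finset.sum_le_sum_of_subset_of_nonneg ?_ fun j _ _ => by positivity
      exact Finset.range_subset_range.mpr (by omega)
    -- bound on the E part summed over i
    have hEsum : (∑ i, ∑ x ∈ (Finset.range (k+1)) ×ˢ (Finset.univ : Finset (Fin m)),
        (E (k - x.1) i x.2) ^ 2) ≤ ε2 := by
      rw [key, Finset.sum_comm]
      have hrefl : (∑ x ∈ (Finset.range (k+1)) ×ˢ (Finset.univ : Finset (Fin m)),
          ∑ i, (E (k - x.1) i x.2) ^ 2)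
          = ∑ l ∈ Finset.range (k+1), ∑ i, ∑ a, (E l i a) ^ 2 := by
        rw [Finset.sum_product]
        have := Finset.sum_range_reflect (fun l => ∑ i, ∑ a, (E l i a) ^ 2) (k+1)
        rw [← this]
        refine Finset.sum_congr rfl fun j hj => ?_
        have : k + 1 - 1 - j = k - j := by omega
        rw [this, Finset.sum_comm]
      rw [hrefl]
      have hsplit : Finset.range (k+1) = insert 0 (Finset.Icc 1 k) := by
        ext x; simp [Nat.lt_succ_iff]; omega
      rw [hsplit, Finset.sum_insert (by simp)]
      rw [hE0]
      simp only [Matrix.zero_apply, ne_eq, OfNat.ofNat_ne_zero, not_false_eq_true,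
        zero_pow, Finset.sum_const_zero, zero_add]
      refine Finset.sum_le_sum_of_subset_of_nonneg (Finset.Icc_subset_Icc_right hk)
        fun l _ _ => by positivity
    calc (∑ i, (y k i - yh k i) ^ 2)
        ≤ ∑ i, (∑ x ∈ (Finset.range (k+1)) ×ˢ (Finset.univ : Finset (Fin m)),
            (E (k - x.1) i x.2) ^ 2) *
          (∑ x ∈ (Finset.range (k+1)) ×ˢ (Finset.univ : Finset (Fin m)),
            (u x.1 x.2) ^ 2) := Finset.sum_le_sum fun i _ => cs i
      _ = (∑ i, ∑ x ∈ (Finset.range (k+1)) ×ˢ (Finset.univ : Finset (Fin m)),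
            (E (k - x.1) i x.2) ^ 2) *
          (∑ x ∈ (Finset.range (k+1)) ×ˢ (Finset.univ : Finset (Fin m)),
            (u x.1 x.2) ^ 2) := by rw [Finset.sum_mul]
      _ ≤ ε2 * U := by
          refine mul_le_mul hEsum hUk ?_ hε2nonneg
          rw [Finset.sum_product]
          exact hUk_nonneg _
  calc Real.sqrt (∑ i, (y k i - yh k i) ^ 2)
      ≤ Real.sqrt (ε2 * U) := Real.sqrt_le_sqrt main
    _ = Real.sqrt ε2 * Real.sqrt U := Real.sqrt_mul hε2nonneg U
end

section
/- Let A₁₁ ∈ ℝ^{r×r}, let Σ₁ ∈ ℝ^{r×r} be a symmetric positive definite matrix, and let Q ∈ ℝ^{r×r} be symmetric positive semidefinite such that A₁₁ Σ₁ A₁₁ᵀ − Σ₁ + Q = 0. Assume the pair (A₁₁, Q) is controllable, i.e., the only vector v ∈ ℂ^r satisfying v* A₁₁^k Q = 0 for all k ∈ ℕ is v = 0. Then every complex eigenvalue μ of A₁₁ satisfies |μ| < 1, i.e., A₁₁ is stable. -/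
open Matrix

private lemma antisym_sum_zero' {r : ℕ} (f : Fin r → Fin r → ℝ) (hf : ∀ j k, f j k = - f k j) :
    ∑ j, ∑ k, f j k = 0 := by
  have h1 : ∑ j, ∑ k, f j k = ∑ k, ∑ j, f j k := Finset.sum_comm
  have h2 : (∑ k : Fin r, ∑ j : Fin r, f j k) = -∑ j, ∑ k, f j k := by
    rw [← Finset.sum_neg_distrib]
    exact Finset.sum_congr rfl fun k _ => by
      rw [← Finset.sum_neg_distrib]
      exact Finset.sum_congr rfl fun j _ => by rw [hf j k]
  linarith

private lemma quad_map' {r : ℕ} (N : Matrix (Fin r) (Fin r) ℝ) (hN : N.IsSymm) (v : Fin r → ℂ) :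
    star v ⬝ᵥ ((N.map Complex.ofReal) *ᵥ v) =
      Complex.ofReal ((fun i => (v i).re) ⬝ᵥ (N *ᵥ fun i => (v i).re)
        + (fun i => (v i).im) ⬝ᵥ (N *ᵥ fun i => (v i).im)) := by
  have hsym : ∀ j k, N j k = N k j := fun j k => (Matrix.IsSymm.apply hN k j)
  apply Complex.ext
  · simp [dotProduct, mulVec, Finset.mul_sum, Complex.mul_re, map_apply,
      Finset.sum_add_distrib, mul_comm, mul_left_comm]
  · simp only [dotProduct, mulVec, Finset.mul_sum, Complex.mul_im, map_apply,
      Complex.im_sum, Complex.ofReal_im, Pi.star_apply, Complex.star_def,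
      Complex.conj_re, Complex.conj_im, Complex.mul_re, Complex.ofReal_re,
      zero_mul, mul_zero, add_zero, zero_add, zero_sub, neg_mul, mul_neg]
    apply antisym_sum_zero'
    intro j k
    rw [hsym j k]
    ring

/-- Stability preservation (Proposition 3.1 of the paper).
If `Σ₁` is symmetric positive definite, `Q` is symmetric positive semidefinite,
`A₁₁ Σ₁ A₁₁ᵀ − Σ₁ + Q = 0`, and the pair `(A₁₁, Q)` is controllable (the only
`v ∈ ℂ^r` with `v* A₁₁^k Q = 0` for all `k` is `v = 0`), then every complex
eigenvalue `μ` of `A₁₁` satisfies `|μ| < 1`. -/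
theorem tlbt_stability_preservation
    {r : ℕ}
    (A11 Sg1 Q : Matrix (Fin r) (Fin r) ℝ)
    (hSg1 : Sg1.PosDef) (hQ : Q.PosSemidef)
    (heq : A11 * Sg1 * A11ᵀ - Sg1 + Q = 0)
    (hctrb : ∀ v : Fin r → ℂ,
      (∀ k : ℕ,
        Matrix.vecMul (star v) ((A11.map Complex.ofReal) ^ k * Q.map Complex.ofReal) = 0) →
      v = 0) :
    ∀ μ ∈ spectrum ℂ (A11.map Complex.ofReal), ‖μ‖ < 1 := by
  intro μ hμ
  set Mc := A11.map Complex.ofReal with hMc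
  set Sc := Sg1.map Complex.ofReal with hSc
  set Qc := Q.map Complex.ofReal with hQc
  -- symmetry facts
  have hSsymm : Sg1.IsSymm := hSg1.isHermitian
  have hQsymm : Q.IsSymm := hQ.isHermitian
  have hMcH : Mcᴴ = A11ᵀ.map Complex.ofReal := by
    ext i j; simp [hMc, conjTranspose_apply, map_apply, Complex.conj_ofReal]
  have hQcH : Qcᴴ = Qc := by
    ext i j
    simp only [conjTranspose_apply, map_apply, Complex.conj_ofReal, hQc, Complex.star_def]
    rw [show Q j i = Q i j from by rw [← Matrix.IsSymm.apply hQsymm i j]]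
  -- eigenvector of Mcᴴ
  obtain ⟨v, hv0, hv⟩ : ∃ v : Fin r → ℂ, v ≠ 0 ∧ Mcᴴ *ᵥ v = (starRingEnd ℂ μ) • v := by
    rw [spectrum.mem_iff] at hμ
    have hdet : (Matrix.scalar (Fin r) μ - Mc).det = 0 := by
      by_contra h
      exact hμ (by rw [Matrix.isUnit_iff_isUnit_det]; exact isUnit_iff_ne_zero.mpr h)
    have hdet' : ((Matrix.scalar (Fin r) (starRingEnd ℂ μ)) - Mcᴴ).det = 0 := by
      have := congrArg star hdet
      rw [← Matrix.det_conjTranspose] at this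
      simpa [conjTranspose_sub, Pi.star_def, Complex.star_def] using this
    obtain ⟨v, hv0, hv⟩ := (Matrix.exists_mulVec_eq_zero_iff).mpr hdet'
    refine ⟨v, hv0, ?_⟩
    rw [sub_mulVec] at hv
    have h2 : (Matrix.scalar (Fin r) (starRingEnd ℂ μ)) *ᵥ v = (starRingEnd ℂ μ) • v := by
      ext i
      simp [Matrix.scalar, mulVec_diagonal, Algebra.algebraMap_eq_smul_one, smul_mulVec]
    rw [h2, sub_eq_zero] at hv
    exact hv.symm
  -- left eigenvector property
  have hleft : vecMul (star v) Mc = μ • star v := by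
    have := congrArg star hv
    rw [star_mulVec, conjTranspose_conjTranspose] at this
    rw [this, star_smul]
    simp
  have hleftk : ∀ k : ℕ, vecMul (star v) (Mc ^ k) = μ ^ k • star v := by
    intro k
    induction k with
    | zero => simp
    | succ n ih =>
      rw [pow_succ, ← vecMul_vecMul, ih, smul_vecMul, hleft, smul_smul, pow_succ]
  -- complexified Stein equation
  have hstein : Mc * Sc * Mcᴴ - Sc + Qc = 0 := by
    have := congrArg (fun X : Matrix (Fin r) (Fin r) ℝ => X.map Complex.ofReal) heq
    rw [show ((0 : Matrix (Fin r) (Fin r) ℝ).map Complex.ofReal) = 0 from by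
      ext i j; simp] at this
    rw [← this, hMcH]
    ext i j
    simp [hMc, hSc, hQc, map_apply, mul_apply, Finset.mul_sum, Finset.sum_mul]
  -- quadratic values
  set x : Fin r → ℝ := fun i => (v i).re with hx
  set y : Fin r → ℝ := fun i => (v i).im with hy
  set s : ℝ := x ⬝ᵥ (Sg1 *ᵥ x) + y ⬝ᵥ (Sg1 *ᵥ y) with hs
  set q : ℝ := x ⬝ᵥ (Q *ᵥ x) + y ⬝ᵥ (Q *ᵥ y) with hq
  have hvS : star v ⬝ᵥ (Sc *ᵥ v) = Complex.ofReal s := quad_map' Sg1 hSsymm v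
  have hvQ : star v ⬝ᵥ (Qc *ᵥ v) = Complex.ofReal q := quad_map' Q hQsymm v
  -- positivity
  have hxy : x ≠ 0 ∨ y ≠ 0 := by
    by_contra h
    push_neg at h
    apply hv0
    ext i
    have h1 := congrFun h.1 i
    have h2 := congrFun h.2 i
    simp only [hx, hy, Pi.zero_apply] at h1 h2
    exact Complex.ext (by simpa using h1) (by simpa using h2)
  have hSnn : ∀ w : Fin r → ℝ, 0 ≤ w ⬝ᵥ (Sg1 *ᵥ w) := by
    intro w
    simpa using hSg1.posSemidef.dotProduct_mulVec_nonneg w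
  have hSpos : ∀ w : Fin r → ℝ, w ≠ 0 → 0 < w ⬝ᵥ (Sg1 *ᵥ w) := by
    intro w hw
    simpa using hSg1.dotProduct_mulVec_pos hw
  have hspos : 0 < s := by
    rcases hxy with h | h
    · have := hSpos x h; have := hSnn y; rw [hs]; linarith
    · have := hSpos y h; have := hSnn x; rw [hs]; linarith
  have hQnn : ∀ w : Fin r → ℝ, 0 ≤ w ⬝ᵥ (Q *ᵥ w) := by
    intro w
    simpa using hQ.dotProduct_mulVec_nonneg w
  have hqnn : 0 ≤ q := by
    have := hQnn x; have := hQnn y; rw [hq]; linarith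
  -- dot the Stein equation with v
  have hMSM : star v ⬝ᵥ ((Mc * Sc * Mcᴴ) *ᵥ v)
      = Complex.ofReal (Complex.normSq μ) * Complex.ofReal s := by
    rw [← Matrix.mulVec_mulVec, ← Matrix.mulVec_mulVec, hv, mulVec_smul, mulVec_smul,
      dotProduct_smul, Matrix.dotProduct_mulVec, hleft, smul_dotProduct, hvS]
    rw [smul_eq_mul, smul_eq_mul, ← mul_assoc, mul_comm (starRingEnd ℂ μ) μ]
    rw [show μ * (starRingEnd ℂ μ) = Complex.ofReal (Complex.normSq μ) from Complex.mul_conj μ]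
  have hdotted : Complex.ofReal (Complex.normSq μ * s - s + q) = 0 := by
    have := congrArg (fun X => star v ⬝ᵥ (X *ᵥ v)) hstein
    simp only [add_mulVec, sub_mulVec, dotProduct_add, dotProduct_sub, zero_mulVec,
      dotProduct_zero] at this
    rw [hMSM, hvS, hvQ] at this
    push_cast
    rw [← this]
  have hreal : Complex.normSq μ * s - s + q = 0 := by
    exact_mod_cast hdotted
  -- conclude
  have hle : Complex.normSq μ ≤ 1 := by
    nlinarith
  have hlt : Complex.normSq μ < 1 := by
    rcases lt_or_eq_of_le hle with h | h
    · exact h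
    · exfalso
      -- then q = 0
      have hq0 : q = 0 := by nlinarith
      have hqx : x ⬝ᵥ (Q *ᵥ x) = 0 := by
        have := hQnn x; have := hQnn y; rw [hq] at hq0; linarith
      have hqy : y ⬝ᵥ (Q *ᵥ y) = 0 := by
        have := hQnn x; have := hQnn y; rw [hq] at hq0; linarith
      have hQx : Q *ᵥ x = 0 := by
        rw [← Matrix.PosSemidef.dotProduct_mulVec_zero_iff hQ x]
        simpa using hqx
      have hQy : Q *ᵥ y = 0 := by
        rw [← Matrix.PosSemidef.dotProduct_mulVec_zero_iff hQ y]
        simpa using hqy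
      have hQv : Qc *ᵥ v = 0 := by
        ext i
        have h1 := congrFun hQx i
        have h2 := congrFun hQy i
        simp only [mulVec, dotProduct, Pi.zero_apply] at h1 h2 ⊢
        apply Complex.ext
        · simpa [hQc, map_apply, Complex.mul_re] using h1
        · simpa [hQc, map_apply, Complex.mul_im] using h2
      have hvQc : vecMul (star v) Qc = 0 := by
        have := congrArg star hQv
        rw [star_mulVec, hQcH] at this
        simpa using this
      have : v = 0 := by
        apply hctrb
        intro k
        rw [← vecMul_vecMul, hleftk k, smul_vecMul, hvQc]
        simp
      exact hv0 this
  have habs : ‖μ‖ ^ 2 < 1 := by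
    rw [Complex.sq_norm]; exact hlt
  nlinarith [norm_nonneg μ]
end

section
/- Let A ∈ ℝ^{n×n}, B ∈ ℝ^{n×m}, C ∈ ℝ^{p×n} with A stable (all complex eigenvalues of modulus < 1), and suppose the system is balanced: with Σ_∞ = diag(σ₁, …, σ_n), both A Σ_∞ Aᵀ − Σ_∞ + B Bᵀ = 0 and Aᵀ Σ_∞ A − Σ_∞ + Cᵀ C = 0 hold. Partition A = [[A₁₁, A₁₂],[A₂₁, A₂₂]], B = [B₁; B₂], C = [C₁, C₂], Σ_∞ = diag(Σ₁,∞, Σ₂,∞) with leading blocks of size r, write A_{:2} = [A₁₂; A₂₂], and assume A₁₁ is also stable. Let Z_∞ = Σ_{j=1}^{∞} (Aᵀ)^{j-1} Cᵀ C₁ A₁₁^{j-1} (the series converges). Then the squared infinite-horizon h₂ error of the balanced-truncation reduced model Ŝ = (A₁₁, B₁, C₁) satisfies Σ_{j=1}^{∞} ‖C A^{j-1} B − C₁ A₁₁^{j-1} B₁‖_F² ≤ trace(C₂ Σ₂,∞ C₂ᵀ + 2 A₁₂ Σ₂,∞ A_{:2}ᵀ Z_∞). -/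
open Matrix Finset Filter Topology
open scoped NNReal ENNReal

section decay
attribute [local instance] Matrix.linftyOpNormedAddCommGroup Matrix.linftyOpNormedRing
  Matrix.linftyOpNormedAlgebra

example {n : Type} [Fintype n] : CompleteSpace (Matrix n n ℂ) := by infer_instance

lemma entry_le_linfty {m' n' : Type*} [Fintype m'] [Fintype n'] (A : Matrix m' n' ℂ) (i : m') (j : n') :
    ‖A i j‖ ≤ ‖A‖ := by
  rw [Matrix.linfty_opNorm_def]
  calc ‖A i j‖ ≤ ((∑ k : n', ‖A i k‖₊ : ℝ≥0) : ℝ) := by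
        push_cast
        exact Finset.single_le_sum (f := fun k => (‖A i k‖₊ : ℝ)) (by intro k _; positivity) (Finset.mem_univ j)
    _ ≤ _ := by
        exact_mod_cast NNReal.coe_le_coe.mpr (Finset.le_sup (f := fun i : m' => ∑ j : n', ‖A i j‖₊) (Finset.mem_univ i))

lemma specrad_lt_one {n : Type*} [Fintype n] [DecidableEq n] (M : Matrix n n ℂ)
    (h : ∀ μ ∈ spectrum ℂ M, ‖μ‖ < 1) : spectralRadius ℂ M < 1 := by
  rw [spectralRadius]
  rcases Set.eq_empty_or_nonempty (spectrum ℂ M) with he | hne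
  · simp [he]
  · obtain ⟨μ₀, hμ₀, hmax⟩ := Set.exists_max_image _ (fun μ => ‖μ‖₊) (Matrix.finite_spectrum M) hne
    have : (⨆ μ ∈ spectrum ℂ M, (‖μ‖₊ : ENNReal)) ≤ (‖μ₀‖₊ : ENNReal) := by
      refine iSup₂_le fun μ hμ => ?_
      exact_mod_cast hmax μ hμ
    refine lt_of_le_of_lt this ?_
    have := h μ₀ hμ₀
    exact_mod_cast (show (‖μ₀‖₊ : ℝ≥0) < 1 by exact_mod_cast this)
end decay

section decay2
attribute [local instance] Matrix.linftyOpNormedAddCommGroup Matrix.linftyOpNormedRing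
  Matrix.linftyOpNormedAlgebra

lemma decay_cx {n : Type*} [Fintype n] [DecidableEq n] (M : Matrix n n ℂ)
    (h : ∀ μ ∈ spectrum ℂ M, ‖μ‖ < 1) :
    ∃ c : ℝ, 0 ≤ c ∧ ∃ ρ : ℝ, 0 ≤ ρ ∧ ρ < 1 ∧ ∀ j : ℕ, ‖M ^ j‖ ≤ c * ρ ^ j := by
  have hsr := specrad_lt_one M h
  obtain ⟨ρ₀, h1, h2⟩ := ENNReal.lt_iff_exists_nnreal_btwn.mp hsr
  set ρ : ℝ≥0 := max ρ₀ 2⁻¹ with hρ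
  have hρ1 : ρ < 1 := by
    rw [hρ]; rw [max_lt_iff]
    constructor
    · exact_mod_cast h2
    · exact_mod_cast (by norm_num : ((2:ℝ≥0)⁻¹:ℝ) < 1)
  have hρpos : (0:ℝ≥0) < ρ := lt_of_lt_of_le (by norm_num) (le_max_right _ _)
  have hsrρ : spectralRadius ℂ M < (ρ : ℝ≥0∞) := lt_of_lt_of_le h1 (by exact_mod_cast le_max_left _ _)
  have hten := spectrum.pow_nnnorm_pow_one_div_tendsto_nhds_spectralRadius M
  have hev : ∀ᶠ j : ℕ in atTop, (‖M ^ j‖₊ : ℝ≥0∞) ^ (1 / (j:ℝ)) < (ρ : ℝ≥0∞) :=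
    hten.eventually_lt_const hsrρ
  have hev2 : ∀ᶠ j : ℕ in atTop, ‖M ^ j‖ ≤ (ρ:ℝ) ^ j := by
    filter_upwards [hev, eventually_ge_atTop 1] with j hj hj1
    have hje : ((‖M ^ j‖₊ : ℝ≥0∞) ^ (1 / (j:ℝ))) ^ (j:ℝ) ≤ ((ρ:ℝ≥0∞)) ^ (j:ℝ) := by
      exact ENNReal.rpow_le_rpow hj.le (by positivity)
    rw [← ENNReal.rpow_mul, one_div,
      inv_mul_cancel₀ (by positivity : (j:ℝ) ≠ 0), ENNReal.rpow_one, ENNReal.rpow_natCast] at hje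
    have : ‖M ^ j‖₊ ≤ ρ ^ j := by exact_mod_cast hje
    calc ‖M ^ j‖ = ((‖M ^ j‖₊ : ℝ≥0) : ℝ) := rfl
      _ ≤ ((ρ ^ j : ℝ≥0) : ℝ) := by exact_mod_cast this
      _ = (ρ:ℝ) ^ j := by push_cast; ring
  obtain ⟨N, hN⟩ := eventually_atTop.mp hev2
  set c : ℝ := (∑ j ∈ Finset.range N, ‖M ^ j‖ / (ρ:ℝ) ^ j) + 1 with hc
  have hterm : ∀ j, 0 ≤ ‖M ^ j‖ / (ρ:ℝ) ^ j := fun j => by positivity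
  have hcpos : (0:ℝ) ≤ c := by
    rw [hc]; positivity
  refine ⟨c, hcpos, (ρ:ℝ), ρ.coe_nonneg, by exact_mod_cast hρ1, fun j => ?_⟩
  by_cases hjN : N ≤ j
  · calc ‖M ^ j‖ ≤ (ρ:ℝ) ^ j := hN j hjN
      _ ≤ c * (ρ:ℝ) ^ j := by
          have hc1 : (1:ℝ) ≤ c := by
            rw [hc]
            have := Finset.sum_nonneg (fun i (_ : i ∈ Finset.range N) => hterm i)
            linarith
          exact le_mul_of_one_le_left (by positivity) hc1
  · push_neg at hjN
    have hle : ‖M ^ j‖ / (ρ:ℝ) ^ j ≤ c := by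
      rw [hc]
      have : ‖M ^ j‖ / (ρ:ℝ) ^ j ≤ ∑ i ∈ Finset.range N, ‖M ^ i‖ / (ρ:ℝ) ^ i :=
        Finset.single_le_sum (fun i _ => hterm i) (Finset.mem_range.mpr hjN)
      linarith
    have hρj : (0:ℝ) < (ρ:ℝ) ^ j := by positivity
    calc ‖M ^ j‖ = (‖M ^ j‖ / (ρ:ℝ) ^ j) * (ρ:ℝ) ^ j := by field_simp
      _ ≤ c * (ρ:ℝ) ^ j := by nlinarith
end decay2

section decay3
attribute [local instance] Matrix.linftyOpNormedAddCommGroup Matrix.linftyOpNormedRing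
  Matrix.linftyOpNormedAlgebra

lemma decay_real {n : Type*} [Fintype n] [DecidableEq n] (M : Matrix n n ℝ)
    (h : ∀ μ ∈ spectrum ℂ (M.map Complex.ofReal), ‖μ‖ < 1) :
    ∃ c ρ : ℝ, 0 ≤ c ∧ 0 ≤ ρ ∧ ρ < 1 ∧ ∀ (j : ℕ) (i k : n), |(M ^ j) i k| ≤ c * ρ ^ j := by
  obtain ⟨c, hc, ρ, hρ0, hρ1, hb⟩ := decay_cx (M.map Complex.ofReal) h
  refine ⟨c, ρ, hc, hρ0, hρ1, fun j i k => ?_⟩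
  have hpow : (M.map Complex.ofReal) ^ j = (M ^ j).map Complex.ofReal := by
    have := map_pow (Complex.ofRealHom.mapMatrix) M j
    exact this.symm
  calc |(M ^ j) i k| = ‖(((M ^ j).map Complex.ofReal)) i k‖ := by
        simp [Matrix.map_apply, Complex.norm_real, Real.norm_eq_abs]
    _ ≤ ‖((M.map Complex.ofReal)) ^ j‖ := by rw [hpow]; exact entry_le_linfty _ i k
    _ ≤ c * ρ ^ j := hb j
end decay3

section machinery
variable {a b c d : Type*} [Fintype a] [Fintype b] [Fintype c] [Fintype d]

lemma entry_triple_bound (P : Matrix a b ℝ) (X : Matrix b c ℝ) (Q : Matrix c d ℝ)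
    {cP cQ : ℝ} (hP : ∀ i k, |P i k| ≤ cP) (hQ : ∀ i k, |Q i k| ≤ cQ)
    (hcP : 0 ≤ cP) (hcQ : 0 ≤ cQ) (i : a) (k : d) :
    |(P * X * Q) i k| ≤ cP * cQ * (∑ u : b, ∑ v : c, |X u v|) := by
  have : (P * X * Q) i k = ∑ u : b, ∑ v : c, P i u * X u v * Q v k := by
    simp only [Matrix.mul_apply, Finset.sum_mul]
    rw [Finset.sum_comm]
  rw [this]
  calc |∑ u : b, ∑ v : c, P i u * X u v * Q v k|
      ≤ ∑ u : b, ∑ v : c, |P i u * X u v * Q v k| := by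
        refine (Finset.abs_sum_le_sum_abs _ _).trans ?_
        exact Finset.sum_le_sum fun u _ => Finset.abs_sum_le_sum_abs _ _
    _ ≤ ∑ u : b, ∑ v : c, cP * cQ * |X u v| := by
        refine Finset.sum_le_sum fun u _ => Finset.sum_le_sum fun v _ => ?_
        rw [abs_mul, abs_mul]
        calc |P i u| * |X u v| * |Q v k| ≤ cP * |X u v| * cQ := by
              have h1 := hP i u; have h2 := hQ v k
              have h3 : (0:ℝ) ≤ |X u v| := abs_nonneg _
              exact mul_le_mul (mul_le_mul_of_nonneg_right h1 h3) h2 (abs_nonneg _)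
                (by positivity)
          _ = cP * cQ * |X u v| := by ring
    _ = cP * cQ * (∑ u : b, ∑ v : c, |X u v|) := by
        simp [Finset.mul_sum]

lemma summable_of_entry_bound {f : ℕ → Matrix a b ℝ} {c ρ : ℝ} (hρ0 : 0 ≤ ρ) (hρ1 : ρ < 1)
    (hb : ∀ (j : ℕ) (i : a) (k : b), |f j i k| ≤ c * ρ ^ j) : Summable f := by
  have : ∀ (i : a) (k : b), Summable fun j => f j i k := by
    intro i k
    refine Summable.of_norm_bounded ?_ (fun j => hb j i k)
    exact (summable_geometric_of_lt_one hρ0 hρ1).mul_left c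
  rw [show Summable f ↔ Summable (fun j => (f j : a → b → ℝ)) from Iff.rfl]
  refine Pi.summable.mpr ?_
  intro i
  refine Pi.summable.mpr ?_
  exact fun k => this i k

lemma mat_tsum_apply {f : ℕ → Matrix a b ℝ} (hf : Summable f) (i : a) (k : b) :
    (∑' j, f j) i k = ∑' j, f j i k := by
  have hf1 : Summable (fun j => (f j : a → b → ℝ)) := hf
  exact (congrFun (tsum_apply hf1 (x := i)) k).trans (tsum_apply (Pi.summable.mp hf1 i))
end machinery

section machinery2
variable {a b c d : Type*} [Fintype a] [Fintype b] [Fintype c] [Fintype d]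
  [DecidableEq a] [DecidableEq b]

/-- The additive monoid hom `X ↦ P * X * Q`. -/
def matMulMulHom (P : Matrix a b ℝ) (Q : Matrix c d ℝ) : Matrix b c ℝ →+ Matrix a d ℝ where
  toFun X := P * X * Q
  map_zero' := by simp
  map_add' X Y := by rw [Matrix.mul_add, Matrix.add_mul]

lemma continuous_matMulMulHom (P : Matrix a b ℝ) (Q : Matrix c d ℝ) :
    Continuous (matMulMulHom P Q) := by
  show Continuous fun X : Matrix b c ℝ => P * X * Q
  exact (continuous_const.matrix_mul continuous_id).matrix_mul continuous_const

lemma summable_mulMul {f : ℕ → Matrix b c ℝ} (hf : Summable f)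
    (P : Matrix a b ℝ) (Q : Matrix c d ℝ) : Summable fun j => P * f j * Q :=
  (hf.hasSum.map (matMulMulHom P Q) (continuous_matMulMulHom P Q)).summable

lemma tsum_mulMul {f : ℕ → Matrix b c ℝ} (hf : Summable f)
    (P : Matrix a b ℝ) (Q : Matrix c d ℝ) :
    P * (∑' j, f j) * Q = ∑' j, P * f j * Q :=
  (hf.hasSum.map (matMulMulHom P Q) (continuous_matMulMulHom P Q)).tsum_eq.symm

/-- The additive monoid hom `X ↦ trace (X * N)`. -/
def matTraceMulHom (N : Matrix b a ℝ) : Matrix a b ℝ →+ ℝ where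
  toFun X := Matrix.trace (X * N)
  map_zero' := by simp
  map_add' X Y := by rw [Matrix.add_mul, Matrix.trace_add]

lemma continuous_matTraceMulHom (N : Matrix b a ℝ) : Continuous (matTraceMulHom N) := by
  show Continuous fun X : Matrix a b ℝ => Matrix.trace (X * N)
  have : Continuous fun X : Matrix a a ℝ => Matrix.trace X := by
    show Continuous fun X : Matrix a a ℝ => ∑ i, X i i
    exact continuous_finset_sum _ fun i _ =>
      ((continuous_apply i).comp (continuous_apply i))
  exact this.comp (continuous_id.matrix_mul continuous_const)

lemma summable_traceMul {f : ℕ → Matrix a b ℝ} (hf : Summable f) (N : Matrix b a ℝ) :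
    Summable fun j => Matrix.trace (f j * N) :=
  (hf.hasSum.map (matTraceMulHom N) (continuous_matTraceMulHom N)).summable

lemma tsum_traceMul {f : ℕ → Matrix a b ℝ} (hf : Summable f) (N : Matrix b a ℝ) :
    Matrix.trace ((∑' j, f j) * N) = ∑' j, Matrix.trace (f j * N) :=
  (hf.hasSum.map (matTraceMulHom N) (continuous_matTraceMulHom N)).tsum_eq.symm

/-- Stein identity for a convergent Gramian-type series. -/
lemma stein_tsum {P : Matrix a a ℝ} {Q : Matrix b b ℝ} {X : Matrix a b ℝ}
    (hsum : Summable fun j : ℕ => P ^ j * X * Q ^ j) :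
    P * (∑' j : ℕ, P ^ j * X * Q ^ j) * Q = (∑' j : ℕ, P ^ j * X * Q ^ j) - X := by
  have h1 : P * (∑' j : ℕ, P ^ j * X * Q ^ j) * Q
      = ∑' j : ℕ, P ^ (j + 1) * X * Q ^ (j + 1) := by
    rw [tsum_mulMul hsum P Q]
    congr 1; funext j
    rw [pow_succ' P, pow_succ Q]
    simp only [Matrix.mul_assoc]
  rw [h1]
  have h2 := Summable.tsum_eq_zero_add hsum
  simp only [pow_zero, Matrix.one_mul, Matrix.mul_one] at h2
  rw [eq_sub_iff_add_eq, add_comm, ← h2]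

lemma stein_zero {A : Matrix a a ℝ} {c ρ : ℝ} (hρ0 : 0 ≤ ρ) (hρ1 : ρ < 1)
    (hb : ∀ (j : ℕ) (i k : a), |(A ^ j) i k| ≤ c * ρ ^ j)
    (D : Matrix a a ℝ) (hD : Aᵀ * D * A = D) : D = 0 := by
  rcases isEmpty_or_nonempty a with he | hne
  · ext i k; exact he.elim i
  have hc : 0 ≤ c := by
    have h := hb 0 (Classical.arbitrary a) (Classical.arbitrary a)
    simp [Matrix.one_apply_eq] at h
    linarith
  have hiter : ∀ j : ℕ, (Aᵀ) ^ j * D * A ^ j = D := by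
    intro j
    induction j with
    | zero => simp
    | succ n ih =>
      have hre : (Aᵀ) ^ (n + 1) * D * A ^ (n + 1) = (Aᵀ) ^ n * (Aᵀ * D * A) * A ^ n := by
        rw [pow_succ ((Aᵀ)), pow_succ' A]
        simp only [Matrix.mul_assoc]
      rw [hre, hD, ih]
  set S : ℝ := ∑ u : a, ∑ v : a, |D u v| with hS
  ext i k
  have hbnd2 : ∀ j : ℕ, |D i k| ≤ (c * c * S) * (ρ * ρ) ^ j := by
    intro j
    have hPb : ∀ (u v : a), |(((Aᵀ) ^ j)) u v| ≤ c * ρ ^ j := by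
      intro u v
      rw [← Matrix.transpose_pow]
      exact hb j v u
    have := entry_triple_bound ((Aᵀ) ^ j) D (A ^ j) hPb (fun u v => hb j u v)
      (by positivity) (by positivity) i k
    rw [hiter j] at this
    calc |D i k| ≤ (c * ρ ^ j) * (c * ρ ^ j) * S := this
      _ = (c * c * S) * (ρ * ρ) ^ j := by rw [mul_pow]; ring
  have hlim : Filter.Tendsto (fun j : ℕ => (c * c * S) * (ρ * ρ) ^ j) Filter.atTop (nhds 0) := by
    have h1 : Filter.Tendsto (fun j : ℕ => (ρ * ρ) ^ j) Filter.atTop (nhds 0) :=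
      tendsto_pow_atTop_nhds_zero_of_lt_one (by positivity) (by nlinarith)
    simpa using h1.const_mul (c * c * S)
  have : |D i k| ≤ 0 := ge_of_tendsto hlim (Filter.Eventually.of_forall hbnd2)
  have := abs_nonpos_iff.mp this
  simpa using this
end machinery2

section machinery3
variable {a b c d : Type*} [Fintype a] [Fintype b] [Fintype c] [Fintype d]
  [DecidableEq a] [DecidableEq b]

lemma summable_gram (P : Matrix a a ℝ) (Q : Matrix b b ℝ) (X : Matrix a b ℝ)
    {cP ρP cQ ρQ : ℝ} (hcP : 0 ≤ cP) (hρP0 : 0 ≤ ρP) (hρP1 : ρP < 1)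
    (hcQ : 0 ≤ cQ) (hρQ0 : 0 ≤ ρQ) (hρQ1 : ρQ < 1)
    (hbP : ∀ (j : ℕ) (i k : a), |(P ^ j) i k| ≤ cP * ρP ^ j)
    (hbQ : ∀ (j : ℕ) (i k : b), |(Q ^ j) i k| ≤ cQ * ρQ ^ j) :
    Summable fun j : ℕ => P ^ j * X * Q ^ j := by
  set S : ℝ := ∑ u : a, ∑ v : b, |X u v| with hS
  have hSnn : 0 ≤ S := Finset.sum_nonneg fun u _ => Finset.sum_nonneg fun v _ => abs_nonneg _
  refine summable_of_entry_bound (c := cP * cQ * S) (ρ := ρP * ρQ)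
    (by positivity) (by nlinarith) (fun j i k => ?_)
  have := entry_triple_bound (P ^ j) X (Q ^ j) (hbP j) (hbQ j)
    (by positivity) (by positivity) i k
  calc |(P ^ j * X * Q ^ j) i k| ≤ cP * ρP ^ j * (cQ * ρQ ^ j) * S := this
    _ = cP * cQ * S * (ρP * ρQ) ^ j := by rw [mul_pow]; ring

lemma tr_rot3 (X : Matrix a b ℝ) (Y : Matrix b c ℝ) (Z : Matrix c a ℝ) :
    Matrix.trace (X * Y * Z) = Matrix.trace (Z * X * Y) := by
  rw [Matrix.trace_mul_comm, ← Matrix.mul_assoc]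

lemma trace_outer {a b c d : Type*} [Fintype a] [Fintype b] [Fintype c] [Fintype d]
    (P : Matrix a b ℝ) (Q : Matrix a c ℝ) (R : Matrix b d ℝ) (S : Matrix c d ℝ) :
    Matrix.trace ((P * R) * (Q * S)ᵀ) = Matrix.trace ((Qᵀ * P) * (R * Sᵀ)) := by
  rw [Matrix.transpose_mul]
  rw [show (P * R) * (Sᵀ * Qᵀ) = P * ((R * Sᵀ) * Qᵀ) by simp only [Matrix.mul_assoc]]
  rw [Matrix.trace_mul_comm]
  rw [show ((R * Sᵀ) * Qᵀ) * P = (R * Sᵀ) * (Qᵀ * P) by simp only [Matrix.mul_assoc]]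
  rw [Matrix.trace_mul_comm]

lemma trace_mul_diagonal [DecidableEq c] (M : Matrix c c ℝ) (dg : c → ℝ) :
    Matrix.trace (M * Matrix.diagonal dg) = ∑ i : c, M i i * dg i := by
  simp [Matrix.trace, Matrix.diag, Matrix.mul_apply, Matrix.diagonal]
end machinery3
/-- For a stable balanced system with stable truncated block
`A₁₁`, the series `Z_∞ = Σ_{j=1}^{∞} (Aᵀ)^{j-1} Cᵀ C₁ A₁₁^{j-1}` converges and
the squared infinite-horizon h₂ error of balanced truncation satisfies
`Σ_{j=1}^{∞} ‖C A^{j-1} B − C₁ A₁₁^{j-1} B₁‖_F²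
  ≤ trace(C₂ Σ₂,∞ C₂ᵀ) + 2 trace(A₁₂ Σ₂,∞ A_{:2}ᵀ Z_∞)`. -/
theorem bt_infinite_horizon_h2_error_upper_bound
    {m p r s : ℕ}
    (A11 : Matrix (Fin r) (Fin r) ℝ) (A12 : Matrix (Fin r) (Fin s) ℝ)
    (A21 : Matrix (Fin s) (Fin r) ℝ) (A22 : Matrix (Fin s) (Fin s) ℝ)
    (B1 : Matrix (Fin r) (Fin m) ℝ) (B2 : Matrix (Fin s) (Fin m) ℝ)
    (C1 : Matrix (Fin p) (Fin r) ℝ) (C2 : Matrix (Fin p) (Fin s) ℝ)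
    (σ : Fin r ⊕ Fin s → ℝ)
    (A : Matrix (Fin r ⊕ Fin s) (Fin r ⊕ Fin s) ℝ)
    (B : Matrix (Fin r ⊕ Fin s) (Fin m) ℝ)
    (C : Matrix (Fin p) (Fin r ⊕ Fin s) ℝ)
    (hA : A = Matrix.fromBlocks A11 A12 A21 A22)
    (hB : B = Matrix.fromRows B1 B2)
    (hC : C = Matrix.fromCols C1 C2)
    (Sg : Matrix (Fin r ⊕ Fin s) (Fin r ⊕ Fin s) ℝ) (hSg : Sg = Matrix.diagonal σ)
    (Sg2 : Matrix (Fin s) (Fin s) ℝ) (hSg2 : Sg2 = Matrix.diagonal fun i => σ (Sum.inr i))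
    -- A and A₁₁ are stable
    (hstabA : ∀ μ ∈ spectrum ℂ (A.map Complex.ofReal), ‖μ‖ < 1)
    (hstabA11 : ∀ μ ∈ spectrum ℂ (A11.map Complex.ofReal), ‖μ‖ < 1)
    -- the system is balanced (infinite horizon)
    (hbalP : A * Sg * Aᵀ - Sg + B * Bᵀ = 0)
    (hbalQ : Aᵀ * Sg * A - Sg + Cᵀ * C = 0) :
    Summable (fun j : ℕ => (Aᵀ) ^ j * Cᵀ * C1 * A11 ^ j) ∧
    Summable (fun j : ℕ =>
      Matrix.trace ((C * A ^ j * B - C1 * A11 ^ j * B1) *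
        (C * A ^ j * B - C1 * A11 ^ j * B1)ᵀ)) ∧
    ∑' j : ℕ,
        Matrix.trace ((C * A ^ j * B - C1 * A11 ^ j * B1) *
          (C * A ^ j * B - C1 * A11 ^ j * B1)ᵀ)
      ≤ Matrix.trace (C2 * Sg2 * C2ᵀ)
        + 2 * Matrix.trace (A12 * Sg2 * (Matrix.fromRows A12 A22)ᵀ *
            (∑' j : ℕ, (Aᵀ) ^ j * Cᵀ * C1 * A11 ^ j)) := by
  classical
  obtain ⟨cA, ρA, hcA, hρA0, hρA1, hbA⟩ := decay_real A hstabA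
  obtain ⟨c1, ρ1, hc1, hρ10, hρ11, hb1⟩ := decay_real A11 hstabA11
  have hbAt : ∀ (j : ℕ) i k, |((Aᵀ) ^ j) i k| ≤ cA * ρA ^ j := by
    intro j i k; rw [← Matrix.transpose_pow]; exact hbA j k i
  have hb1t : ∀ (j : ℕ) i k, |((A11ᵀ) ^ j) i k| ≤ c1 * ρ1 ^ j := by
    intro j i k; rw [← Matrix.transpose_pow]; exact hb1 j k i
  -- the three Gramian series
  have hZsum : Summable fun j : ℕ => (Aᵀ) ^ j * (Cᵀ * C1) * A11 ^ j :=
    summable_gram _ _ _ hcA hρA0 hρA1 hc1 hρ10 hρ11 hbAt hb1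
  have hQsum : Summable fun j : ℕ => (Aᵀ) ^ j * (Cᵀ * C) * A ^ j :=
    summable_gram _ _ _ hcA hρA0 hρA1 hcA hρA0 hρA1 hbAt hbA
  have hQhsum : Summable fun j : ℕ => (A11ᵀ) ^ j * (C1ᵀ * C1) * A11 ^ j :=
    summable_gram _ _ _ hc1 hρ10 hρ11 hc1 hρ10 hρ11 hb1t hb1
  set Z : Matrix (Fin r ⊕ Fin s) (Fin r) ℝ := ∑' j : ℕ, (Aᵀ) ^ j * (Cᵀ * C1) * A11 ^ j with hZdef
  set Qinf : Matrix (Fin r ⊕ Fin s) (Fin r ⊕ Fin s) ℝ :=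
    ∑' j : ℕ, (Aᵀ) ^ j * (Cᵀ * C) * A ^ j with hQinfdef
  set Qh : Matrix (Fin r) (Fin r) ℝ := ∑' j : ℕ, (A11ᵀ) ^ j * (C1ᵀ * C1) * A11 ^ j with hQhdef
  have hZfe : (fun j : ℕ => (Aᵀ) ^ j * Cᵀ * C1 * A11 ^ j)
      = fun j : ℕ => (Aᵀ) ^ j * (Cᵀ * C1) * A11 ^ j := by
    funext j; simp only [Matrix.mul_assoc]
  -- Stein identities
  have hZst : Aᵀ * Z * A11 = Z - Cᵀ * C1 := by rw [hZdef]; exact stein_tsum hZsum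
  have hQst : Aᵀ * Qinf * A = Qinf - Cᵀ * C := by rw [hQinfdef]; exact stein_tsum hQsum
  have hQhst : A11ᵀ * Qh * A11 = Qh - C1ᵀ * C1 := by rw [hQhdef]; exact stein_tsum hQhsum
  -- Sg is the observability Gramian
  have hbalQ' : Aᵀ * Sg * A = Sg - Cᵀ * C := by
    have h0 : Aᵀ * Sg * A - (Sg - Cᵀ * C) = 0 := by rw [← hbalQ]; abel
    exact sub_eq_zero.mp h0
  have hBB : B * Bᵀ = Sg - A * Sg * Aᵀ := by
    have h0 : B * Bᵀ - (Sg - A * Sg * Aᵀ) = 0 := by rw [← hbalP]; abel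
    exact sub_eq_zero.mp h0
  have hSgQ : Sg = Qinf := by
    have hD : Aᵀ * (Sg - Qinf) * A = Sg - Qinf := by
      rw [Matrix.mul_sub, Matrix.sub_mul, hbalQ', hQst]
      abel
    have h0 := stein_zero hρA0 hρA1 hbA _ hD
    exact sub_eq_zero.mp h0
  -- block selector matrices
  set J : Matrix (Fin r ⊕ Fin s) (Fin r) ℝ := Matrix.fromRows 1 0 with hJ
  set K : Matrix (Fin r ⊕ Fin s) (Fin s) ℝ := Matrix.fromRows 0 1 with hK
  set Sg1 : Matrix (Fin r) (Fin r) ℝ := Matrix.diagonal (fun i => σ (Sum.inl i)) with hSg1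
  have hJt : Jᵀ = Matrix.fromCols 1 0 := by
    rw [hJ, Matrix.transpose_fromRows, Matrix.transpose_one, Matrix.transpose_zero]
  have hKt : Kᵀ = Matrix.fromCols 0 1 := by
    rw [hK, Matrix.transpose_fromRows, Matrix.transpose_one, Matrix.transpose_zero]
  have hJJ : Jᵀ * J = 1 := by rw [hJt, hJ, Matrix.fromCols_mul_fromRows]; simp
  have hKK : Kᵀ * K = 1 := by rw [hKt, hK, Matrix.fromCols_mul_fromRows]; simp
  have hKJ : Kᵀ * J = 0 := by rw [hKt, hJ, Matrix.fromCols_mul_fromRows]; simp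
  have hA11e : Jᵀ * A * J = A11 := by
    rw [hJt, hJ, hA, Matrix.fromCols_mul_fromBlocks, Matrix.fromCols_mul_fromRows]; simp
  have hA12e : Jᵀ * A * K = A12 := by
    rw [hJt, hK, hA, Matrix.fromCols_mul_fromBlocks, Matrix.fromCols_mul_fromRows]; simp
  have hB1e : Jᵀ * B = B1 := by rw [hJt, hB, Matrix.fromCols_mul_fromRows]; simp
  have hC1e : C * J = C1 := by rw [hC, hJ, Matrix.fromCols_mul_fromRows]; simp
  have hC2e : C * K = C2 := by rw [hC, hK, Matrix.fromCols_mul_fromRows]; simp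
  have hC1t : Jᵀ * Cᵀ = C1ᵀ := by rw [← Matrix.transpose_mul, hC1e]
  have hC2t : Kᵀ * Cᵀ = C2ᵀ := by rw [← Matrix.transpose_mul, hC2e]
  have hAKe : A * K = Matrix.fromRows A12 A22 := by
    rw [hA, hK, Matrix.fromBlocks_mul_fromRows]; simp
  have hSgJK : Sg = J * Sg1 * Jᵀ + K * Sg2 * Kᵀ := by
    have h1 : J * Sg1 * Jᵀ = Matrix.fromBlocks Sg1 0 0 0 := by
      rw [hJ, hJt, Matrix.fromRows_mul, Matrix.fromRows_mul_fromCols]; simp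
    have h2 : K * Sg2 * Kᵀ = Matrix.fromBlocks 0 0 0 Sg2 := by
      rw [hK, hKt, Matrix.fromRows_mul, Matrix.fromRows_mul_fromCols]; simp
    rw [h1, h2, Matrix.fromBlocks_add, hSg, hSg1, hSg2]
    simp only [add_zero, zero_add, Matrix.fromBlocks_diagonal]
    congr 1
    funext x
    cases x <;> rfl
  have hJtS : Jᵀ * Sg = Sg1 * Jᵀ := by
    rw [hSgJK, Matrix.mul_add]
    rw [show Jᵀ * (J * Sg1 * Jᵀ) = (Jᵀ * J) * (Sg1 * Jᵀ) by simp only [Matrix.mul_assoc]]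
    rw [show Jᵀ * (K * Sg2 * Kᵀ) = (Jᵀ * K) * (Sg2 * Kᵀ) by simp only [Matrix.mul_assoc]]
    have hJK : Jᵀ * K = 0 := by rw [hJt, hK, Matrix.fromCols_mul_fromRows]; simp
    rw [hJJ, hJK]
    simp
  have hKtS : Kᵀ * Sg = Sg2 * Kᵀ := by
    rw [hSgJK, Matrix.mul_add]
    rw [show Kᵀ * (J * Sg1 * Jᵀ) = (Kᵀ * J) * (Sg1 * Jᵀ) by simp only [Matrix.mul_assoc]]
    rw [show Kᵀ * (K * Sg2 * Kᵀ) = (Kᵀ * K) * (Sg2 * Kᵀ) by simp only [Matrix.mul_assoc]]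
    rw [hKJ, hKK]
    simp
  -- T1
  have hT1 : Matrix.trace (Sg * (B * Bᵀ))
      = Matrix.trace (C1 * Sg1 * C1ᵀ) + Matrix.trace (C2 * Sg2 * C2ᵀ) := by
    have hstep : Matrix.trace (Sg * (A * Sg * Aᵀ)) = Matrix.trace (Sg * (Aᵀ * Sg * A)) := by
      calc Matrix.trace (Sg * (A * Sg * Aᵀ)) = Matrix.trace ((Sg * A * Sg) * Aᵀ) := by
            simp only [Matrix.mul_assoc]
        _ = Matrix.trace (Aᵀ * (Sg * A * Sg)) := Matrix.trace_mul_comm _ _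
        _ = Matrix.trace ((Aᵀ * Sg * A) * Sg) := by simp only [Matrix.mul_assoc]
        _ = Matrix.trace (Sg * (Aᵀ * Sg * A)) := Matrix.trace_mul_comm _ _
    calc Matrix.trace (Sg * (B * Bᵀ))
        = Matrix.trace (Sg * Sg) - Matrix.trace (Sg * (A * Sg * Aᵀ)) := by
          rw [hBB, Matrix.mul_sub, Matrix.trace_sub]
      _ = Matrix.trace (Sg * Sg) - Matrix.trace (Sg * (Aᵀ * Sg * A)) := by rw [hstep]
      _ = Matrix.trace (Sg * (Sg - Aᵀ * Sg * A)) := by rw [Matrix.mul_sub, Matrix.trace_sub]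
      _ = Matrix.trace (Sg * (Cᵀ * C)) := by
          rw [show Sg - Aᵀ * Sg * A = Cᵀ * C from by rw [hbalQ']; abel]
      _ = Matrix.trace ((Cᵀ * C) * Sg) := Matrix.trace_mul_comm _ _
      _ = Matrix.trace (Cᵀ * (C * Sg)) := by simp only [Matrix.mul_assoc]
      _ = Matrix.trace ((C * Sg) * Cᵀ) := Matrix.trace_mul_comm _ _
      _ = Matrix.trace (C * (J * Sg1 * Jᵀ + K * Sg2 * Kᵀ) * Cᵀ) := by rw [← hSgJK]
      _ = Matrix.trace (C1 * Sg1 * C1ᵀ) + Matrix.trace (C2 * Sg2 * C2ᵀ) := by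
          rw [Matrix.mul_add, Matrix.add_mul, Matrix.trace_add]
          congr 1
          · rw [show C * (J * Sg1 * Jᵀ) * Cᵀ = (C * J) * Sg1 * (Jᵀ * Cᵀ) by
              simp only [Matrix.mul_assoc], hC1e, hC1t]
          · rw [show C * (K * Sg2 * Kᵀ) * Cᵀ = (C * K) * Sg2 * (Kᵀ * Cᵀ) by
              simp only [Matrix.mul_assoc], hC2e, hC2t]
  -- transposed block identities
  have hA11te : Jᵀ * Aᵀ * J = A11ᵀ := by
    rw [← hA11e, Matrix.transpose_mul, Matrix.transpose_mul, Matrix.transpose_transpose]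
    simp only [Matrix.mul_assoc]
  have hA12te : Kᵀ * Aᵀ * J = A12ᵀ := by
    rw [← hA12e, Matrix.transpose_mul, Matrix.transpose_mul, Matrix.transpose_transpose]
    simp only [Matrix.mul_assoc]
  -- T2
  have htermZ : Matrix.trace (Z * (Sg1 * Jᵀ)) = Matrix.trace (Jᵀ * Z * Sg1) := by
    rw [← Matrix.mul_assoc]
    exact tr_rot3 Z Sg1 Jᵀ
  have hT2 : Matrix.trace (Z * (B1 * Bᵀ))
      = Matrix.trace (C1 * Sg1 * C1ᵀ) - Matrix.trace (A12 * Sg2 * ((A * K)ᵀ * Z)) := by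
    have hB1B : B1 * Bᵀ = Sg1 * Jᵀ - Jᵀ * (A * Sg * Aᵀ) := by
      rw [← hB1e, Matrix.mul_assoc, hBB, Matrix.mul_sub, hJtS]
    have hterm_a : Matrix.trace (Aᵀ * (Z * (Jᵀ * (A * (J * Sg1 * Jᵀ)))))
        = Matrix.trace (Jᵀ * Z * Sg1) - Matrix.trace (C1 * Sg1 * C1ᵀ) := by
      rw [show Aᵀ * (Z * (Jᵀ * (A * (J * Sg1 * Jᵀ))))
          = Aᵀ * Z * (Jᵀ * A * J) * (Sg1 * Jᵀ) from by simp only [Matrix.mul_assoc], hA11e]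
      rw [show Aᵀ * Z * A11 * (Sg1 * Jᵀ) = (Aᵀ * Z * A11) * (Sg1 * Jᵀ) from rfl, hZst,
        Matrix.sub_mul, Matrix.trace_sub, htermZ]
      congr 1
      rw [show (Cᵀ * C1) * (Sg1 * Jᵀ) = Cᵀ * (C1 * Sg1 * Jᵀ) from by simp only [Matrix.mul_assoc],
        Matrix.trace_mul_comm,
        show (C1 * Sg1 * Jᵀ) * Cᵀ = (C1 * Sg1) * (Jᵀ * Cᵀ) from by simp only [Matrix.mul_assoc],
        hC1t]
    have hterm_b : Matrix.trace (Aᵀ * (Z * (Jᵀ * (A * (K * Sg2 * Kᵀ)))))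
        = Matrix.trace (A12 * Sg2 * ((A * K)ᵀ * Z)) := by
      rw [show Aᵀ * (Z * (Jᵀ * (A * (K * Sg2 * Kᵀ))))
          = Aᵀ * Z * (Jᵀ * A * K) * Sg2 * Kᵀ from by simp only [Matrix.mul_assoc], hA12e,
        Matrix.trace_mul_comm,
        show Kᵀ * (Aᵀ * Z * A12 * Sg2) = (Kᵀ * Aᵀ * Z) * (A12 * Sg2) from by
          simp only [Matrix.mul_assoc],
        Matrix.trace_mul_comm, Matrix.transpose_mul]
    have hterm2 : Matrix.trace (Z * (Jᵀ * (A * Sg * Aᵀ)))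
        = Matrix.trace (Jᵀ * Z * Sg1) - Matrix.trace (C1 * Sg1 * C1ᵀ)
          + Matrix.trace (A12 * Sg2 * ((A * K)ᵀ * Z)) := by
      rw [show Z * (Jᵀ * (A * Sg * Aᵀ)) = (Z * (Jᵀ * (A * Sg))) * Aᵀ from by
        simp only [Matrix.mul_assoc], Matrix.trace_mul_comm, hSgJK]
      rw [show Aᵀ * (Z * (Jᵀ * (A * (J * Sg1 * Jᵀ + K * Sg2 * Kᵀ))))
          = Aᵀ * (Z * (Jᵀ * (A * (J * Sg1 * Jᵀ)))) + Aᵀ * (Z * (Jᵀ * (A * (K * Sg2 * Kᵀ)))) from by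
        simp only [Matrix.mul_add]]
      rw [Matrix.trace_add, hterm_a, hterm_b]
    rw [hB1B, Matrix.mul_sub, Matrix.trace_sub, htermZ, hterm2]
    ring
  -- T3
  have hT3 : Matrix.trace (Qh * (B1 * B1ᵀ))
      = Matrix.trace (C1 * Sg1 * C1ᵀ) - Matrix.trace (A12ᵀ * Qh * A12 * Sg2) := by
    have hmid : Jᵀ * (A * Sg * Aᵀ) * J = A11 * Sg1 * A11ᵀ + A12 * Sg2 * A12ᵀ := by
      rw [hSgJK]
      rw [show Jᵀ * (A * (J * Sg1 * Jᵀ + K * Sg2 * Kᵀ) * Aᵀ) * J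
          = (Jᵀ * A * J) * Sg1 * (Jᵀ * Aᵀ * J) + (Jᵀ * A * K) * Sg2 * (Kᵀ * Aᵀ * J) from by
        simp only [Matrix.mul_add, Matrix.add_mul, Matrix.mul_assoc]]
      rw [show (Jᵀ * A * J) * Sg1 * (Jᵀ * Aᵀ * J) = (Jᵀ * A * J) * Sg1 * A11ᵀ from by rw [hA11te]]
      rw [show (Jᵀ * A * K) * Sg2 * (Kᵀ * Aᵀ * J) = (Jᵀ * A * K) * Sg2 * A12ᵀ from by rw [hA12te]]
      rw [hA11e, hA12e]
    have hB1B1 : B1 * B1ᵀ = Sg1 - (A11 * Sg1 * A11ᵀ + A12 * Sg2 * A12ᵀ) := by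
      have h1 : B1 * B1ᵀ = Jᵀ * (B * Bᵀ) * J := by
        rw [← hB1e, Matrix.transpose_mul]
        simp only [Matrix.transpose_transpose, Matrix.mul_assoc]
      rw [h1, hBB, Matrix.mul_sub, Matrix.sub_mul, hmid,
        show (Jᵀ * Sg) * J = Sg1 * (Jᵀ * J) from by rw [hJtS, Matrix.mul_assoc], hJJ,
        Matrix.mul_one]
    have htA : Matrix.trace (Qh * (A11 * Sg1 * A11ᵀ))
        = Matrix.trace (Qh * Sg1) - Matrix.trace (C1 * Sg1 * C1ᵀ) := by
      rw [show Qh * (A11 * Sg1 * A11ᵀ) = (Qh * (A11 * Sg1)) * A11ᵀ from by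
        simp only [Matrix.mul_assoc], Matrix.trace_mul_comm,
        show A11ᵀ * (Qh * (A11 * Sg1)) = (A11ᵀ * Qh * A11) * Sg1 from by
          simp only [Matrix.mul_assoc], hQhst, Matrix.sub_mul, Matrix.trace_sub]
      congr 1
      rw [show (C1ᵀ * C1) * Sg1 = C1ᵀ * (C1 * Sg1) from by simp only [Matrix.mul_assoc],
        Matrix.trace_mul_comm]
    have htB : Matrix.trace (Qh * (A12 * Sg2 * A12ᵀ))
        = Matrix.trace (A12ᵀ * Qh * A12 * Sg2) := by
      rw [show Qh * (A12 * Sg2 * A12ᵀ) = (Qh * (A12 * Sg2)) * A12ᵀ from by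
        simp only [Matrix.mul_assoc], Matrix.trace_mul_comm,
        show A12ᵀ * (Qh * (A12 * Sg2)) = (A12ᵀ * Qh * A12) * Sg2 from by
          simp only [Matrix.mul_assoc]]
    rw [hB1B1, Matrix.mul_sub, Matrix.mul_add, Matrix.trace_sub, Matrix.trace_add, htA, htB]
    ring
  -- pointwise expansion of the error trace
  have hid : ∀ j : ℕ,
      Matrix.trace ((C * A ^ j * B - C1 * A11 ^ j * B1) *
        (C * A ^ j * B - C1 * A11 ^ j * B1)ᵀ)
      = Matrix.trace (((Aᵀ) ^ j * (Cᵀ * C) * A ^ j) * (B * Bᵀ))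
        - 2 * Matrix.trace (((Aᵀ) ^ j * (Cᵀ * C1) * A11 ^ j) * (B1 * Bᵀ))
        + Matrix.trace (((A11ᵀ) ^ j * (C1ᵀ * C1) * A11 ^ j) * (B1 * B1ᵀ)) := by
    intro j
    have hxx : Matrix.trace ((C * A ^ j * B) * (C * A ^ j * B)ᵀ)
        = Matrix.trace (((Aᵀ) ^ j * (Cᵀ * C) * A ^ j) * (B * Bᵀ)) := by
      rw [trace_outer (C * A ^ j) (C * A ^ j) B B]
      congr 1
      rw [Matrix.transpose_mul, Matrix.transpose_pow]
      simp only [Matrix.mul_assoc]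
    have hyx : Matrix.trace ((C1 * A11 ^ j * B1) * (C * A ^ j * B)ᵀ)
        = Matrix.trace (((Aᵀ) ^ j * (Cᵀ * C1) * A11 ^ j) * (B1 * Bᵀ)) := by
      rw [trace_outer (C1 * A11 ^ j) (C * A ^ j) B1 B]
      congr 1
      rw [Matrix.transpose_mul, Matrix.transpose_pow]
      simp only [Matrix.mul_assoc]
    have hyy : Matrix.trace ((C1 * A11 ^ j * B1) * (C1 * A11 ^ j * B1)ᵀ)
        = Matrix.trace (((A11ᵀ) ^ j * (C1ᵀ * C1) * A11 ^ j) * (B1 * B1ᵀ)) := by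
      rw [trace_outer (C1 * A11 ^ j) (C1 * A11 ^ j) B1 B1]
      congr 1
      rw [Matrix.transpose_mul, Matrix.transpose_pow]
      simp only [Matrix.mul_assoc]
    have hxy : Matrix.trace ((C * A ^ j * B) * (C1 * A11 ^ j * B1)ᵀ)
        = Matrix.trace ((C1 * A11 ^ j * B1) * (C * A ^ j * B)ᵀ) := by
      conv_lhs => rw [← Matrix.trace_transpose]
      rw [Matrix.transpose_mul, Matrix.transpose_transpose]
    rw [Matrix.transpose_sub, Matrix.sub_mul, Matrix.mul_sub, Matrix.mul_sub,
      Matrix.trace_sub, Matrix.trace_sub, Matrix.trace_sub, hxx, hxy, hyx, hyy]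
    ring
  have hfeq : (fun j : ℕ => Matrix.trace ((C * A ^ j * B - C1 * A11 ^ j * B1) *
        (C * A ^ j * B - C1 * A11 ^ j * B1)ᵀ))
      = fun j : ℕ => Matrix.trace (((Aᵀ) ^ j * (Cᵀ * C) * A ^ j) * (B * Bᵀ))
        - 2 * Matrix.trace (((Aᵀ) ^ j * (Cᵀ * C1) * A11 ^ j) * (B1 * Bᵀ))
        + Matrix.trace (((A11ᵀ) ^ j * (C1ᵀ * C1) * A11 ^ j) * (B1 * B1ᵀ)) := funext hid
  have ht1sum := summable_traceMul hQsum (B * Bᵀ)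
  have ht2sum := summable_traceMul hZsum (B1 * Bᵀ)
  have ht3sum := summable_traceMul hQhsum (B1 * B1ᵀ)
  have hesum : Summable (fun j : ℕ => Matrix.trace ((C * A ^ j * B - C1 * A11 ^ j * B1) *
      (C * A ^ j * B - C1 * A11 ^ j * B1)ᵀ)) := by
    rw [hfeq]
    exact (ht1sum.sub (ht2sum.mul_left 2)).add ht3sum
  have hTsum : (∑' j : ℕ, Matrix.trace ((C * A ^ j * B - C1 * A11 ^ j * B1) *
        (C * A ^ j * B - C1 * A11 ^ j * B1)ᵀ))
      = Matrix.trace (Qinf * (B * Bᵀ)) - 2 * Matrix.trace (Z * (B1 * Bᵀ))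
        + Matrix.trace (Qh * (B1 * B1ᵀ)) := by
    rw [hfeq, Summable.tsum_add (ht1sum.sub (ht2sum.mul_left 2)) ht3sum,
      Summable.tsum_sub ht1sum (ht2sum.mul_left 2), tsum_mul_left,
      hQinfdef, hZdef, hQhdef,
      tsum_traceMul hQsum (B * Bᵀ), tsum_traceMul hZsum (B1 * Bᵀ),
      tsum_traceMul hQhsum (B1 * B1ᵀ)]
  -- nonnegativity facts
  have hσ2 : ∀ i : Fin s, 0 ≤ σ (Sum.inr i) := by
    intro i
    have h1 : σ (Sum.inr i) = Qinf (Sum.inr i) (Sum.inr i) := by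
      rw [← hSgQ, hSg]; simp [Matrix.diagonal]
    rw [h1, hQinfdef, mat_tsum_apply hQsum]
    refine tsum_nonneg fun j => ?_
    have h2 : (Aᵀ) ^ j * (Cᵀ * C) * A ^ j = (C * A ^ j)ᵀ * (C * A ^ j) := by
      rw [Matrix.transpose_mul, Matrix.transpose_pow]; simp only [Matrix.mul_assoc]
    rw [h2, Matrix.mul_apply]
    exact Finset.sum_nonneg fun k _ => by rw [Matrix.transpose_apply]; exact mul_self_nonneg _
  have hQhd : ∀ i : Fin s, 0 ≤ (A12ᵀ * Qh * A12) i i := by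
    intro i
    have h1 : A12ᵀ * Qh * A12
        = ∑' j : ℕ, A12ᵀ * ((A11ᵀ) ^ j * (C1ᵀ * C1) * A11 ^ j) * A12 := by
      rw [hQhdef]; exact tsum_mulMul hQhsum A12ᵀ A12
    rw [h1, mat_tsum_apply (summable_mulMul hQhsum A12ᵀ A12)]
    refine tsum_nonneg fun j => ?_
    have h2 : A12ᵀ * ((A11ᵀ) ^ j * (C1ᵀ * C1) * A11 ^ j) * A12
        = (C1 * A11 ^ j * A12)ᵀ * (C1 * A11 ^ j * A12) := by
      simp only [Matrix.transpose_mul, Matrix.transpose_pow, Matrix.transpose_transpose,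
        Matrix.mul_assoc]
    rw [h2, Matrix.mul_apply]
    exact Finset.sum_nonneg fun k _ => by rw [Matrix.transpose_apply]; exact mul_self_nonneg _
  have hdrop : 0 ≤ Matrix.trace (A12ᵀ * Qh * A12 * Sg2) := by
    rw [hSg2, trace_mul_diagonal]
    exact Finset.sum_nonneg fun i _ => mul_nonneg (hQhd i) (hσ2 i)
  -- conclusion
  refine ⟨?_, hesum, ?_⟩
  · rw [hZfe]; exact hZsum
  · rw [hTsum, ← hAKe, hZfe, ← hZdef, ← hSgQ,
      show A12 * Sg2 * (A * K)ᵀ * Z = A12 * Sg2 * ((A * K)ᵀ * Z) from by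
        simp only [Matrix.mul_assoc]]
    linarith [hT1, hT2, hT3, hdrop]
end

section
/- Let A ∈ ℝ^{n×n} be stable, i.e., every complex eigenvalue of A has modulus strictly less than 1, and let B ∈ ℝ^{n×m}. Then the series P_∞ = Σ_{k=1}^{∞} A^{k-1} B Bᵀ (Aᵀ)^{k-1} converges, and its sum satisfies the Stein (discrete-time Lyapunov) equation A P_∞ Aᵀ − P_∞ + B Bᵀ = 0; moreover P_∞ is the unique solution of this equation. -/
open Matrix Filter

section aux

attribute [local instance] Matrix.frobeniusNormedAddCommGroup Matrix.frobeniusNormedRing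
  Matrix.frobeniusNormedAlgebra

lemma entry_abs_le_frob {n : ℕ} (X : Matrix (Fin n) (Fin n) ℝ) (i j : Fin n) :
    |X i j| ≤ ‖X‖ := by
  rw [Matrix.frobenius_norm_def]
  have h0 : |X i j| = (‖X i j‖ ^ (2:ℝ)) ^ (1/2 : ℝ) := by
    rw [← Real.rpow_mul (norm_nonneg _)]
    norm_num
  rw [h0]
  apply Real.rpow_le_rpow (Real.rpow_nonneg (norm_nonneg _) _)
  · calc ‖X i j‖ ^ (2:ℝ) ≤ ∑ j', ‖X i j'‖ ^ (2:ℝ) := by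
          apply Finset.single_le_sum (fun j' _ => Real.rpow_nonneg (norm_nonneg _) _)
            (Finset.mem_univ j)
      _ ≤ ∑ i', ∑ j', ‖X i' j'‖ ^ (2:ℝ) := by
          apply Finset.single_le_sum
            (fun i' _ => Finset.sum_nonneg fun j' _ => Real.rpow_nonneg (norm_nonneg _) _)
            (Finset.mem_univ i)
  · norm_num

end aux

section aux2
attribute [local instance] Matrix.frobeniusNormedAddCommGroup Matrix.frobeniusNormedRing
  Matrix.frobeniusNormedAlgebra

lemma frob_pow_bound {n : ℕ} (A : Matrix (Fin n) (Fin n) ℝ)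
    (hstab : ∀ μ ∈ spectrum ℂ (A.map Complex.ofReal), ‖μ‖ < 1) :
    ∃ r : ℝ, 0 ≤ r ∧ r < 1 ∧ ∀ᶠ k in atTop, ‖A ^ k‖ ≤ r ^ k := by
  set C : Matrix (Fin n) (Fin n) ℂ := A.map Complex.ofReal with hC
  have hρ : spectralRadius ℂ C < 1 := by
    by_cases hσ : (spectrum ℂ C).Nonempty
    · obtain ⟨μ, hμ, hμeq⟩ := spectrum.exists_nnnorm_eq_spectralRadius_of_nonempty hσ
      rw [← hμeq]
      rw [ENNReal.coe_lt_one_iff, ← NNReal.coe_lt_one, coe_nnnorm]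
      exact hstab μ hμ
    · rw [Set.not_nonempty_iff_eq_empty] at hσ
      simp [spectralRadius, hσ]
  have hg := spectrum.pow_nnnorm_pow_one_div_tendsto_nhds_spectralRadius C
  obtain ⟨r', hρr', hr'1⟩ := exists_between hρ
  lift r' to NNReal using (hr'1.trans_le le_top).ne
  have hev := hg.eventually_lt_const hρr'
  have hr1 : r' < 1 := by exact_mod_cast hr'1
  refine ⟨(r' : ℝ), r'.coe_nonneg, by exact_mod_cast hr1, ?_⟩
  filter_upwards [hev, eventually_ge_atTop 1] with k hk hk1
  have hkne : (k : ℝ) ≠ 0 := by positivity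
  have h2 : (‖C ^ k‖₊ : ENNReal) < (r' : ENNReal) ^ (k : ℝ) := by
    have := ENNReal.rpow_lt_rpow hk (by positivity : (0:ℝ) < (k:ℝ))
    rwa [← ENNReal.rpow_mul, one_div, inv_mul_cancel₀ hkne, ENNReal.rpow_one] at this
  rw [ENNReal.rpow_natCast, ← ENNReal.coe_pow, ENNReal.coe_lt_coe] at h2
  have h3 : ‖C ^ k‖ ≤ (r' : ℝ) ^ k := by
    have := h2.le
    rw [← NNReal.coe_le_coe] at this
    simpa [coe_nnnorm] using this
  have h4 : ‖C ^ k‖ = ‖A ^ k‖ := by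
    have hmap : C ^ k = (A ^ k).map Complex.ofReal := by
      rw [hC]
      show (Complex.ofRealHom.mapMatrix A) ^ k = Complex.ofRealHom.mapMatrix (A ^ k)
      rw [map_pow]
    rw [hmap]
    exact Matrix.frobenius_norm_map_eq (A ^ k) Complex.ofReal (fun a => by
      simp)
  linarith [h3, h4.symm.le]

end aux2

section aux3
attribute [local instance] Matrix.frobeniusNormedAddCommGroup Matrix.frobeniusNormedRing
  Matrix.frobeniusNormedAlgebra

lemma stein_key {n : ℕ} (A : Matrix (Fin n) (Fin n) ℝ)
    (hstab : ∀ μ ∈ spectrum ℂ (A.map Complex.ofReal), ‖μ‖ < 1)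
    (M : Matrix (Fin n) (Fin n) ℝ) :
    ∃ c r : ℝ, 0 ≤ c ∧ 0 ≤ r ∧ r < 1 ∧
      ∀ᶠ k in atTop, ∀ i j, |(A ^ k * M * Aᵀ ^ k) i j| ≤ c * r ^ k := by
  obtain ⟨r, hr0, hr1, hev⟩ := frob_pow_bound A hstab
  refine ⟨‖M‖, r * r, norm_nonneg _, mul_nonneg hr0 hr0, by nlinarith, ?_⟩
  filter_upwards [hev] with k hk i j
  calc |(A ^ k * M * Aᵀ ^ k) i j| ≤ ‖A ^ k * M * Aᵀ ^ k‖ := entry_abs_le_frob _ i j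
    _ ≤ ‖A ^ k * M‖ * ‖Aᵀ ^ k‖ := norm_mul_le _ _
    _ ≤ ‖A ^ k‖ * ‖M‖ * ‖Aᵀ ^ k‖ :=
        mul_le_mul_of_nonneg_right (norm_mul_le _ _) (norm_nonneg _)
    _ = ‖A ^ k‖ * ‖M‖ * ‖A ^ k‖ := by
        rw [← Matrix.transpose_pow, Matrix.frobenius_norm_transpose]
    _ ≤ r ^ k * ‖M‖ * r ^ k := by
        have h0 : (0:ℝ) ≤ ‖A ^ k‖ := norm_nonneg _
        have h1 : (0:ℝ) ≤ ‖M‖ := norm_nonneg _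
        have h2 : (0:ℝ) ≤ r ^ k := pow_nonneg hr0 k
        have h3 : ‖A ^ k‖ * ‖A ^ k‖ ≤ r ^ k * r ^ k := mul_le_mul hk hk h0 h2
        nlinarith
    _ = ‖M‖ * (r * r) ^ k := by rw [mul_pow]; ring

end aux3

/-- For a stable matrix `A` (all complex eigenvalues of modulus
`< 1`) and `B ∈ ℝ^{n×m}`, the series `P_∞ = Σ_{k=1}^{∞} A^{k-1} B Bᵀ (Aᵀ)^{k-1}`
converges, its sum satisfies the Stein equation `A P_∞ Aᵀ − P_∞ + B Bᵀ = 0`,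
and `P_∞` is the unique solution of this equation. -/
theorem infinite_gramian_exists_unique
    {n m : ℕ}
    (A : Matrix (Fin n) (Fin n) ℝ) (B : Matrix (Fin n) (Fin m) ℝ)
    (hstab : ∀ μ ∈ spectrum ℂ (A.map Complex.ofReal), ‖μ‖ < 1) :
    Summable (fun k : ℕ => A ^ k * B * Bᵀ * (Aᵀ) ^ k) ∧
    A * (∑' k : ℕ, A ^ k * B * Bᵀ * (Aᵀ) ^ k) * Aᵀ
        - (∑' k : ℕ, A ^ k * B * Bᵀ * (Aᵀ) ^ k) + B * Bᵀ = 0 ∧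
    ∀ P : Matrix (Fin n) (Fin n) ℝ,
      A * P * Aᵀ - P + B * Bᵀ = 0 →
      P = ∑' k : ℕ, A ^ k * B * Bᵀ * (Aᵀ) ^ k := by
  -- summability of entries for middle matrix M
  have hentry : ∀ M : Matrix (Fin n) (Fin n) ℝ,
      Summable (fun k : ℕ => A ^ k * M * Aᵀ ^ k) := by
    intro M
    obtain ⟨c, r, hc, hr0, hr1, hev⟩ := stein_key A hstab M
    have hgeom : Summable (fun k : ℕ => c * r ^ k) :=
      (summable_geometric_of_lt_one hr0 hr1).mul_left c
    have hij : ∀ i j, Summable (fun k : ℕ => (A ^ k * M * Aᵀ ^ k) i j) := by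
      intro i j
      apply Summable.of_norm_bounded_eventually hgeom
      rw [Nat.cofinite_eq_atTop]
      filter_upwards [hev] with k hk
      simpa [Real.norm_eq_abs] using hk i j
    exact Pi.summable.mpr fun i => Pi.summable.mpr fun j => hij i j
  have hfequal : (fun k : ℕ => A ^ k * B * Bᵀ * (Aᵀ) ^ k)
      = fun k : ℕ => A ^ k * (B * Bᵀ) * Aᵀ ^ k := by
    funext k; rw [Matrix.mul_assoc (A ^ k) B Bᵀ]
  have hsum : Summable (fun k : ℕ => A ^ k * B * Bᵀ * (Aᵀ) ^ k) := by
    rw [hfequal]; exact hentry (B * Bᵀ)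
  refine ⟨hsum, ?_, ?_⟩
  · set S := ∑' k : ℕ, A ^ k * B * Bᵀ * (Aᵀ) ^ k with hSdef
    have hshift : ∀ k : ℕ, A ^ (k+1) * B * Bᵀ * (Aᵀ) ^ (k+1)
        = A * (A ^ k * B * Bᵀ * (Aᵀ) ^ k) * Aᵀ := by
      intro k
      rw [pow_succ' A, pow_succ Aᵀ]
      simp only [Matrix.mul_assoc]
    have hS : S = B * Bᵀ + A * S * Aᵀ := by
      conv_lhs => rw [hSdef, Summable.tsum_eq_zero_add hsum]
      congr 1
      · simp
      · calc ∑' k : ℕ, A ^ (k+1) * B * Bᵀ * (Aᵀ) ^ (k+1)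
            = ∑' k : ℕ, A * (A ^ k * B * Bᵀ * (Aᵀ) ^ k) * Aᵀ := by simp_rw [hshift]
          _ = A * S * Aᵀ := by
              rw [(hsum.mul_left A).tsum_mul_right Aᵀ, hsum.tsum_mul_left A]
    nth_rewrite 2 [hS]
    abel
  · intro P hP
    have hP' : A * P * Aᵀ + B * Bᵀ = P := by
      rw [sub_add_eq_add_sub] at hP
      exact sub_eq_zero.mp hP
    have hInd : ∀ N : ℕ, P = A ^ N * P * Aᵀ ^ N
        + ∑ k ∈ Finset.range N, A ^ k * B * Bᵀ * (Aᵀ) ^ k := by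
      intro N
      induction N with
      | zero => simp
      | succ N ih =>
        have h1 : A ^ N * (A * P * Aᵀ + B * Bᵀ) * Aᵀ ^ N
            = A ^ (N+1) * P * Aᵀ ^ (N+1) + A ^ N * B * Bᵀ * Aᵀ ^ N := by
          rw [Matrix.mul_add, Matrix.add_mul, pow_succ A, pow_succ' Aᵀ]
          congr 1
          · simp only [Matrix.mul_assoc]
          · simp only [Matrix.mul_assoc]
        calc P = A ^ N * P * Aᵀ ^ N
              + ∑ k ∈ Finset.range N, A ^ k * B * Bᵀ * (Aᵀ) ^ k := ih
          _ = A ^ N * (A * P * Aᵀ + B * Bᵀ) * Aᵀ ^ N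
              + ∑ k ∈ Finset.range N, A ^ k * B * Bᵀ * (Aᵀ) ^ k := by rw [hP']
          _ = A ^ (N+1) * P * Aᵀ ^ (N+1)
              + ∑ k ∈ Finset.range (N+1), A ^ k * B * Bᵀ * (Aᵀ) ^ k := by
              rw [h1, Finset.sum_range_succ]
              abel
    obtain ⟨c, r, hc, hr0, hr1, hev⟩ := stein_key A hstab P
    have hzero : Filter.Tendsto (fun N : ℕ => A ^ N * P * Aᵀ ^ N) Filter.atTop (nhds 0) := by
      refine tendsto_pi_nhds.mpr fun i => tendsto_pi_nhds.mpr fun j => ?_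
      have hg : Filter.Tendsto (fun N : ℕ => c * r ^ N) Filter.atTop (nhds 0) := by
        simpa using (tendsto_pow_atTop_nhds_zero_of_lt_one hr0 hr1).const_mul c
      refine squeeze_zero_norm' ?_ hg
      filter_upwards [hev] with N hN
      simpa [Real.norm_eq_abs] using hN i j
    have hfin := hzero.add hsum.hasSum.tendsto_sum_nat
    have heq : (fun N : ℕ => A ^ N * P * Aᵀ ^ N
        + ∑ k ∈ Finset.range N, A ^ k * B * Bᵀ * (Aᵀ) ^ k)
        = fun _ : ℕ => P := funext fun N => (hInd N).symm
    rw [heq] at hfin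
    have := tendsto_nhds_unique tendsto_const_nhds hfin
    simpa using this
end
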